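/- Let E > 0, ρ₀ ∈ ℝ, and let f⁺, f⁻ : [ρ₀, ∞) → ℝ be nonnegative differentiable functions such that f⁺(ρ) + f⁻(ρ) → 0 as ρ → ∞ and, for all ρ ≥ ρ₀, (1/2)·(f⁺)'(ρ) + E·f⁺(ρ) − (E/100)·(f⁺(ρ) + f⁻(ρ)) ≤ 0 and (1/2)·(f⁻)'(ρ) − E·f⁻(ρ) + (E/100)·(f⁺(ρ) + f⁻(ρ)) ≥ 0. Then f⁻(ρ) ≤ f⁺(ρ)/5 for every ρ ≥ ρ₀, and f⁺(ρ) ≤ exp(−(97/50)·E·(ρ − ρ')) · f⁺(ρ') whenever ρ₀ ≤ ρ' ≤ ρ. -/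

import Mathlib

theorem exponential_decay_step3 (E ρ₀ : ℝ) (hE : 0 < E)
    (fp fm fp' fm' : ℝ → ℝ)
    (hfp_nonneg : ∀ ρ, ρ₀ ≤ ρ → 0 ≤ fp ρ)
    (hfm_nonneg : ∀ ρ, ρ₀ ≤ ρ → 0 ≤ fm ρ)
    (hfp_deriv : ∀ ρ, ρ₀ ≤ ρ → HasDerivWithinAt fp (fp' ρ) (Set.Ici ρ₀) ρ)
    (hfm_deriv : ∀ ρ, ρ₀ ≤ ρ → HasDerivWithinAt fm (fm' ρ) (Set.Ici ρ₀) ρ)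
    (hlim : Filter.Tendsto (fun ρ => fp ρ + fm ρ) Filter.atTop (nhds 0))
    (h1 : ∀ ρ, ρ₀ ≤ ρ →
      (1 / 2) * fp' ρ + E * fp ρ - (E / 100) * (fp ρ + fm ρ) ≤ 0)
    (h2 : ∀ ρ, ρ₀ ≤ ρ →
      0 ≤ (1 / 2) * fm' ρ - E * fm ρ + (E / 100) * (fp ρ + fm ρ)) :
    (∀ ρ, ρ₀ ≤ ρ → fm ρ ≤ fp ρ / 5) ∧
    (∀ ρ' ρ, ρ₀ ≤ ρ' → ρ' ≤ ρ →
      fp ρ ≤ Real.exp (-(97 / 50) * E * (ρ - ρ')) * fp ρ') := by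
  -- limits of fp and fm individually
  have hfp0 : Filter.Tendsto fp Filter.atTop (nhds 0) := by
    apply tendsto_of_tendsto_of_tendsto_of_le_of_le' tendsto_const_nhds hlim
    · filter_upwards [Filter.eventually_ge_atTop ρ₀] with x hx using hfp_nonneg x hx
    · filter_upwards [Filter.eventually_ge_atTop ρ₀] with x hx using by
        linarith [hfm_nonneg x hx]
  have hfm0 : Filter.Tendsto fm Filter.atTop (nhds 0) := by
    apply tendsto_of_tendsto_of_tendsto_of_le_of_le' tendsto_const_nhds hlim
    · filter_upwards [Filter.eventually_ge_atTop ρ₀] with x hx using hfm_nonneg x hx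
    · filter_upwards [Filter.eventually_ge_atTop ρ₀] with x hx using by
        linarith [hfp_nonneg x hx]
  -- Part 1: g = fm - fp/5 is monotone with limit 0, hence ≤ 0
  have hg_mono : MonotoneOn (fun ρ => fm ρ - fp ρ / 5) (Set.Ici ρ₀) := by
    apply monotoneOn_of_deriv_nonneg (convex_Ici ρ₀)
    · intro x hx
      exact ((hfm_deriv x hx).sub ((hfp_deriv x hx).div_const 5)).continuousWithinAt
    · intro x hx
      rw [interior_Ici] at hx
      exact ((((hfm_deriv x hx.le).sub ((hfp_deriv x hx.le).div_const 5)).hasDerivAt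
        (Ici_mem_nhds hx)).differentiableAt).differentiableWithinAt
    · intro x hx
      rw [interior_Ici] at hx
      have hd : HasDerivAt (fun ρ => fm ρ - fp ρ / 5) _ x := (((hfm_deriv x hx.le).sub ((hfp_deriv x hx.le).div_const 5)).hasDerivAt
        (Ici_mem_nhds hx))
      rw [hd.deriv]
      nlinarith [h1 x hx.le, h2 x hx.le, mul_nonneg hE.le (hfp_nonneg x hx.le),
        mul_nonneg hE.le (hfm_nonneg x hx.le)]
  have hglim : Filter.Tendsto (fun ρ => fm ρ - fp ρ / 5) Filter.atTop (nhds 0) := by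
    have := hfm0.sub (hfp0.div_const 5)
    simpa using this
  have part1 : ∀ ρ, ρ₀ ≤ ρ → fm ρ ≤ fp ρ / 5 := by
    intro ρ hρ
    have hle : fm ρ - fp ρ / 5 ≤ 0 := by
      apply ge_of_tendsto hglim
      filter_upwards [Filter.eventually_ge_atTop ρ] with x hx
      exact hg_mono (Set.mem_Ici.mpr hρ) (Set.mem_Ici.mpr (hρ.trans hx)) hx
    linarith
  refine ⟨part1, ?_⟩
  -- Part 2: φ = e^{cρ} fp is antitone, c = (97/50)E
  set c : ℝ := (97 / 50) * E with hc
  have hφ_anti : AntitoneOn (fun ρ => Real.exp (c * ρ) * fp ρ) (Set.Ici ρ₀) := by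
    apply antitoneOn_of_deriv_nonpos (convex_Ici ρ₀)
    · intro x hx
      have hexp : HasDerivAt (fun y => Real.exp (c * y)) (c * Real.exp (c * x)) x := by
        simpa [mul_comm] using ((hasDerivAt_id x).const_mul c).exp
      exact (hexp.hasDerivWithinAt.mul (hfp_deriv x hx)).continuousWithinAt
    · intro x hx
      rw [interior_Ici] at hx
      have hexp : HasDerivAt (fun y => Real.exp (c * y)) (c * Real.exp (c * x)) x := by
        simpa [mul_comm] using ((hasDerivAt_id x).const_mul c).exp
      exact ((hexp.mul
        ((hfp_deriv x hx.le).hasDerivAt (Ici_mem_nhds hx))).differentiableAt).differentiableWithinAt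
    · intro x hx
      rw [interior_Ici] at hx
      have hexp : HasDerivAt (fun y => Real.exp (c * y)) (c * Real.exp (c * x)) x := by
        simpa [mul_comm] using ((hasDerivAt_id x).const_mul c).exp
      have hd : HasDerivAt (fun ρ => Real.exp (c * ρ) * fp ρ) _ x := hexp.mul ((hfp_deriv x hx.le).hasDerivAt (Ici_mem_nhds hx))
      rw [hd.deriv]
      have key : c * fp x + fp' x ≤ 0 := by
        have h15 := mul_le_mul_of_nonneg_left (part1 x hx.le) hE.le
        nlinarith [h1 x hx.le, mul_nonneg hE.le (hfp_nonneg x hx.le)]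
      have h0 : Real.exp (c * x) * (c * fp x + fp' x) ≤ 0 :=
        mul_nonpos_of_nonneg_of_nonpos (Real.exp_pos _).le key
      nlinarith [h0]
  intro ρ' ρ hρ' hle
  have hφ := hφ_anti (Set.mem_Ici.mpr hρ') (Set.mem_Ici.mpr (hρ'.trans hle)) hle
  have hpos := Real.exp_pos (c * ρ)
  have hfin : fp ρ ≤ Real.exp (c * ρ' - c * ρ) * fp ρ' := by
    have hφ' : Real.exp (c * ρ) * fp ρ ≤ Real.exp (c * ρ') * fp ρ' := hφ
    rw [Real.exp_sub, div_mul_eq_mul_div, le_div_iff₀ hpos]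
    nlinarith [hφ']
  have : -(97 / 50) * E * (ρ - ρ') = c * ρ' - c * ρ := by rw [hc]; ring
  rw [this]
  exact hfin
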